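/- For every integer k ≥ 0 there is a graph G_k with tree-width at most k and track-number tn(G_k) = (k+1)(k+2)/2. Consequently, the maximum track-number of graphs of tree-width k is at least quadratic in k. -/

import Mathlib

open SimpleGraph

/-- A (proper) track layout of the graph `G` with `t` tracks.
`track v` is the track (colour class) of vertex `v`, and `pos v` gives the
position of `v` in the total order of its track. -/
structure TrackLayout (V : Type) (G : SimpleGraph V) (t : ℕ) where
  /-- the track containing each vertex -/
  track : V → Fin t
  /-- the position of each vertex within its track -/
  pos : V → ℕ
  /-- distinct vertices on a common track occupy distinct positions -/
  inj : ∀ v w : V, track v = track w → pos v = pos w → v = w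
  /-- the tracks form a proper vertex colouring -/
  proper : ∀ v w : V, G.Adj v w → track v ≠ track w
  /-- no X-crossing: there are no edges `vw` and `xy` with `v, x` on one track,
  `w, y` on another track, `v <ᵢ x` and `y <ⱼ w` -/
  noX : ∀ v w x y : V, G.Adj v w → G.Adj x y →
    track v = track x → track w = track y → track v ≠ track w →
    pos v < pos x → pos y < pos w → False
/-- The track-number of `G`: the minimum `t` such that `G` has a `t`-track layout. -/
noncomputable def trackNumber (V : Type) (G : SimpleGraph V) : ℕ :=
  sInf {t : ℕ | Nonempty (TrackLayout V G t)}
/-- A tree-decomposition of `G`: a (finite) tree together with bags `bag x ⊆ V`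
such that every vertex is in some bag, every edge has both end-vertices in a common
bag, and for every vertex the set of nodes whose bag contains it induces a connected
subtree. -/
structure TreeDecomp (V : Type) (G : SimpleGraph V) where
  /-- the index type of the nodes of the tree -/
  ι : Type
  finι : Fintype ι
  /-- the tree -/
  tree : SimpleGraph ι
  isTree : tree.IsTree
  /-- the bags -/
  bag : ι → Set V
  cover : ∀ v : V, ∃ x : ι, v ∈ bag x
  edgeCover : ∀ v w : V, G.Adj v w → ∃ x : ι, v ∈ bag x ∧ w ∈ bag x
  subtreeConnected : ∀ v : V, (tree.induce {x : ι | v ∈ bag x}).Connected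

/-- The tree-width of `G`: the minimum width (one less than the maximum bag size)
of a tree-decomposition of `G`. -/
noncomputable def treewidth (V : Type) (G : SimpleGraph V) : ℕ :=
  sInf {k : ℕ | ∃ D : TreeDecomp V G, ∀ x : D.ι, (D.bag x).ncard ≤ k + 1}

namespace TNProof


/-! ### Trees from parent functions -/

variable {ι : Type}

/-- The graph whose edges join each node to its parent. -/
def parentGraph (p : ι → ι) : SimpleGraph ι := SimpleGraph.fromRel (fun a b => p a = b)

lemma parentGraph_adj (p : ι → ι) (a b : ι) :
    (parentGraph p).Adj a b ↔ a ≠ b ∧ (p a = b ∨ p b = a) :=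
  SimpleGraph.fromRel_adj _ a b

section parent

variable {p : ι → ι} {d : ι → ℕ} {r : ι}

lemma depth_iterate_le (hr : p r = r) (hd : ∀ a, a ≠ r → d (p a) < d a) :
    ∀ (m : ℕ) (a : ι), d (p^[m] a) ≤ d a := by
  intro m
  induction m with
  | zero => simp
  | succ m ih =>
    intro a
    rw [Function.iterate_succ_apply]
    by_cases h : a = r
    · rw [h, hr]; exact ih r
    · exact (ih (p a)).trans (le_of_lt (hd a h))

lemma parentGraph_connected (hr : p r = r) (hd : ∀ a, a ≠ r → d (p a) < d a) [Nonempty ι] :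
    (parentGraph p).Connected := by
  have key : ∀ (n : ℕ) (a : ι), d a ≤ n → (parentGraph p).Reachable a r := by
    intro n
    induction n with
    | zero =>
      intro a ha
      by_cases h : a = r
      · exact h ▸ SimpleGraph.Reachable.refl _
      · exact absurd ((hd a h).trans_le ha) (Nat.not_lt_zero _)
    | succ n ih =>
      intro a ha
      by_cases h : a = r
      · exact h ▸ SimpleGraph.Reachable.refl _
      · have hadj : (parentGraph p).Adj a (p a) := by
          rw [parentGraph_adj]
          refine ⟨?_, Or.inl rfl⟩
          intro he
          have h2 := hd a h
          rw [← he] at h2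
          exact lt_irrefl _ h2
        exact (hadj.reachable).trans (ih (p a) (by have := hd a h; omega))
  exact SimpleGraph.Connected.mk (fun a b => (key (d a) a le_rfl).trans (key (d b) b le_rfl).symm)

lemma below_step {a x z : ι} (hxz : (parentGraph p).Adj x z)
    (hne : s(x, z) ≠ s(a, p a)) (h : ∃ m, p^[m] x = a) : ∃ m, p^[m] z = a := by
  rw [parentGraph_adj] at hxz
  obtain ⟨hxzne, hpx | hpz⟩ := hxz
  · obtain ⟨m, hm⟩ := h
    cases m with
    | zero =>
      simp only [Function.iterate_zero, id_eq] at hm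
      subst hm
      exact absurd (by rw [hpx]) hne
    | succ m =>
      rw [Function.iterate_succ_apply, hpx] at hm
      exact ⟨m, hm⟩
  · obtain ⟨m, hm⟩ := h
    exact ⟨m + 1, by rw [Function.iterate_succ_apply, hpz, hm]⟩

lemma parentGraph_acyclic (hr : p r = r) (hd : ∀ a, a ≠ r → d (p a) < d a) :
    (parentGraph p).IsAcyclic := by
  rw [isAcyclic_iff_forall_adj_isBridge]
  have main : ∀ a : ι, a ≠ p a → (parentGraph p).IsBridge s(a, p a) := by
    intro a hne
    rw [SimpleGraph.isBridge_iff]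
    refine And.right (a := (parentGraph p).Adj a (p a)) ⟨?_, ?_⟩
    · rw [parentGraph_adj]; exact ⟨hne, Or.inl rfl⟩
    · rw [SimpleGraph.reachable_delete_edges_iff_exists_walk]
      rintro ⟨w, hw⟩
      -- propagate the "below a" invariant along the walk
      have inv : ∀ (x y : ι) (q : (parentGraph p).Walk x y), s(a, p a) ∉ q.edges →
          (∃ m, p^[m] x = a) → ∃ m, p^[m] y = a := by
        intro x y q
        induction q with
        | nil => exact fun _ h => h
        | cons hadj q ih =>
          intro hq hx
          rw [SimpleGraph.Walk.edges_cons, List.mem_cons] at hq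
          push_neg at hq
          exact ih hq.2 (below_step hadj (Ne.symm hq.1) hx)
      have hbelow : ∃ m, p^[m] (p a) = a := inv a (p a) w hw ⟨0, rfl⟩
      obtain ⟨m, hm⟩ := hbelow
      have har : a ≠ r := by
        intro h; subst h; rw [hr] at hne; exact hne rfl
      have h1 : d (p^[m] (p a)) ≤ d (p a) := depth_iterate_le hr hd m (p a)
      rw [hm] at h1
      exact absurd (lt_of_le_of_lt h1 (hd a har)) (lt_irrefl _)
  intro v w hvw
  rw [parentGraph_adj] at hvw
  obtain ⟨hne, hp | hp⟩ := hvw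
  · subst hp; exact main v hne
  · subst hp
    rw [Sym2.eq_swap]
    exact main w (Ne.symm hne)

lemma parentGraph_isTree (hr : p r = r) (hd : ∀ a, a ≠ r → d (p a) < d a) [Nonempty ι] :
    (parentGraph p).IsTree :=
  ⟨parentGraph_connected hr hd, parentGraph_acyclic hr hd⟩

end parent

/-! ### Parent functions from trees -/

lemma exists_parent {T : SimpleGraph ι} (hT : T.IsTree) :
    ∃ (r : ι) (p : ι → ι) (d : ι → ℕ), p r = r ∧ (∀ a, a ≠ r → d (p a) < d a) ∧
      (∀ a b, T.Adj a b ↔ a ≠ b ∧ (p a = b ∨ p b = a)) := by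
  classical
  have hconn := hT.isConnected
  have : Nonempty ι := hconn.nonempty
  obtain ⟨r⟩ := this
  -- shortest path realizers
  have real : ∀ a : ι, ∃ q : T.Walk a r, q.IsPath ∧ q.length = T.dist a r := by
    intro a
    obtain ⟨w, hw⟩ := (hconn a r).exists_walk_length_eq_dist
    refine ⟨w.bypass, w.bypass_isPath, le_antisymm ?_ (T.dist_le _)⟩
    calc w.bypass.length ≤ w.length := SimpleGraph.Walk.length_bypass_le w
    _ = T.dist a r := hw
  have key : ∀ a : ι, a ≠ r → ∃ b, T.Adj a b ∧ T.dist b r + 1 = T.dist a r := by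
    intro a ha
    obtain ⟨w, hw⟩ := (hconn a r).exists_walk_length_eq_dist
    cases w with
    | nil => exact absurd rfl ha
    | @cons _ b _ hadj q =>
      refine ⟨b, hadj, ?_⟩
      have h1 : T.dist b r ≤ q.length := T.dist_le q
      have h2 : T.dist a r ≤ T.dist b r + 1 := by
        obtain ⟨qb, _, hqb⟩ := real b
        have := T.dist_le (SimpleGraph.Walk.cons hadj qb)
        rw [SimpleGraph.Walk.length_cons, hqb] at this
        exact this
      rw [SimpleGraph.Walk.length_cons] at hw
      omega
  refine ⟨r, fun a => if h : a = r then r else (key a h).choose, fun a => T.dist a r,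
    by simp, ?_, ?_⟩
  · intro a ha
    simp only [dif_neg ha]
    have := (key a ha).choose_spec.2
    omega
  · -- adjacency characterization
    have claim1 : ∀ a b : ι, T.Adj a b → T.dist b r + 1 = T.dist a r →
        (if h : a = r then r else (key a h).choose) = b := by
      intro a b hab hdist
      have ha : a ≠ r := by
        intro h; subst h
        rw [SimpleGraph.dist_self] at hdist
        omega
      rw [dif_neg ha]
      obtain ⟨hac, hcd⟩ := (key a ha).choose_spec
      set c := (key a ha).choose with hc
      by_contra hne
      -- two distinct paths from a to r
      obtain ⟨Pb, hPb, hPbl⟩ := real b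
      obtain ⟨Pc, hPc, hPcl⟩ := real c
      have hmem : ∀ (x : ι) (Q : T.Walk x r), Q.IsPath → Q.length = T.dist x r →
          T.dist x r < T.dist a r → a ∉ Q.support := by
        intro x Q _ hQl hQd hmem
        have : T.dist a r ≤ (Q.dropUntil a hmem).length := T.dist_le _
        have h2 : (Q.dropUntil a hmem).length ≤ Q.length :=
          SimpleGraph.Walk.length_dropUntil_le Q hmem
        omega
      have hP1 : (SimpleGraph.Walk.cons hab Pb).IsPath :=
        hPb.cons (hmem b Pb hPb hPbl (by omega))
      have hP2 : (SimpleGraph.Walk.cons hac Pc).IsPath :=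
        hPc.cons (hmem c Pc hPc hPcl (by omega))
      obtain ⟨P0, -, huniq⟩ := hT.existsUnique_path a r
      have := (huniq _ hP1).trans (huniq _ hP2).symm
      have hsupp := congrArg SimpleGraph.Walk.support this
      rw [SimpleGraph.Walk.support_cons, SimpleGraph.Walk.support_cons,
        Pb.support_eq_cons, Pc.support_eq_cons] at hsupp
      simp only [List.cons.injEq] at hsupp
      exact hne (hsupp.2.1.symm)
    intro a b
    constructor
    · intro hab
      have hne := hab.ne
      refine ⟨hne, ?_⟩
      have h1 : T.dist a r ≤ T.dist b r + 1 := by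
        obtain ⟨qb, _, hqb⟩ := real b
        have := T.dist_le (SimpleGraph.Walk.cons hab qb)
        rwa [SimpleGraph.Walk.length_cons, hqb] at this
      have h2 : T.dist b r ≤ T.dist a r + 1 := by
        obtain ⟨qa, _, hqa⟩ := real a
        have := T.dist_le (SimpleGraph.Walk.cons hab.symm qa)
        rwa [SimpleGraph.Walk.length_cons, hqa] at this
      rcases lt_trichotomy (T.dist a r) (T.dist b r) with h | h | h
      · exact Or.inr (claim1 b a hab.symm (by omega))
      · -- equal distances: contradiction
        exfalso
        obtain ⟨Pb, hPb, hPbl⟩ := real b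
        have hanb : a ∉ Pb.support := by
          intro hmem
          have ht := congrArg SimpleGraph.Walk.length (Pb.take_spec hmem)
          rw [SimpleGraph.Walk.length_append] at ht
          have htake : 1 ≤ (Pb.takeUntil a hmem).length := by
            by_contra hcon
            push_neg at hcon
            have hh : (Pb.takeUntil a hmem).length = 0 := by omega
            exact hne (SimpleGraph.Walk.eq_of_length_eq_zero hh).symm
          have hdrop : T.dist a r ≤ (Pb.dropUntil a hmem).length := T.dist_le _
          omega
        have hP1 : (SimpleGraph.Walk.cons hab Pb).IsPath := hPb.cons hanb
        obtain ⟨Pa, hPa, hPal⟩ := real a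
        obtain ⟨P0, -, huniq⟩ := hT.existsUnique_path a r
        have heq := (huniq _ hP1).trans (huniq _ hPa).symm
        have := congrArg SimpleGraph.Walk.length heq
        rw [SimpleGraph.Walk.length_cons] at this
        omega
      · exact Or.inl (claim1 a b hab (by omega))
    · rintro ⟨hne, hp | hp⟩
      · have hp' : (if h : a = r then r else (key a h).choose) = b := hp
        by_cases h : a = r
        · rw [dif_pos h] at hp'; exact absurd (h.trans hp') hne
        · rw [dif_neg h] at hp'; exact hp' ▸ (key a h).choose_spec.1
      · have hp' : (if h : b = r then r else (key b h).choose) = a := hp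
        by_cases h : b = r
        · rw [dif_pos h] at hp'; exact absurd (h.trans hp') hne.symm
        · rw [dif_neg h] at hp'; exact (hp' ▸ (key b h).choose_spec.1).symm



def Nf : ℕ → ℕ
  | 0 => 1
  | (k+1) => Nf k + (k + 2)

lemma Nf_succ (k : ℕ) : Nf (k+1) = Nf k + (k+2) := rfl

lemma Nf_pos (k : ℕ) : 1 ≤ Nf k := by
  cases k with
  | zero => exact le_refl 1
  | succ k => show 1 ≤ Nf k + (k+2); omega

lemma Nf_eq (k : ℕ) : Nf k = (k+1)*(k+2)/2 := by
  induction k with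
  | zero => rfl
  | succ k ih =>
    show Nf k + (k+2) = _
    rw [ih]
    obtain ⟨m, hm⟩ := Nat.even_mul_succ_self (k+1)
    have he : (k+1+1)*(k+1+2) = (k+1)*(k+2) + 2*(k+2) := by ring
    omega

def layoutComap {V W : Type} {G : SimpleGraph V} {H : SimpleGraph W} {t : ℕ}
    (f : V → W) (hinj : Function.Injective f)
    (hadj : ∀ u u', G.Adj u u' → H.Adj (f u) (f u')) (L : TrackLayout W H t) :
    TrackLayout V G t where
  track v := L.track (f v)
  pos v := L.pos (f v)
  inj v w h1 h2 := hinj (L.inj _ _ h1 h2)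
  proper v w h := L.proper _ _ (hadj _ _ h)
  noX v w x y hvw hxy h1 h2 h3 h4 h5 :=
    L.noX _ _ _ _ (hadj _ _ hvw) (hadj _ _ hxy) h1 h2 h3 h4 h5

def layoutReindex {V : Type} {G : SimpleGraph V} {t s : ℕ}
    (L : TrackLayout V G t) (φ : Fin t → Fin s)
    (hφ : ∀ v w : V, φ (L.track v) = φ (L.track w) → L.track v = L.track w) :
    TrackLayout V G s where
  track v := φ (L.track v)
  pos := L.pos
  inj v w h1 h2 := L.inj v w (hφ _ _ h1) h2
  proper v w h hc := L.proper v w h (hφ _ _ hc)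
  noX v w x y hvw hxy h1 h2 h3 h4 h5 :=
    L.noX v w x y hvw hxy (hφ _ _ h1) (hφ _ _ h2) (fun hc => h3 (congrArg φ hc)) h4 h5

lemma trackLayout_mono {V : Type} {G : SimpleGraph V} {t t' : ℕ} (h : t ≤ t') :
    Nonempty (TrackLayout V G t) → Nonempty (TrackLayout V G t') := by
  rintro ⟨L⟩
  exact ⟨layoutReindex L (Fin.castLE h) (fun v w hc => Fin.castLE_injective h hc)⟩

noncomputable def layoutAvoid {V : Type} {G : SimpleGraph V} {t : ℕ}
    (L : TrackLayout V G t) (S : Finset (Fin t)) (h : ∀ v, L.track v ∉ S) :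
    TrackLayout V G (t - S.card) := by
  have hcard : Sᶜ.card = t - S.card := by
    rw [Finset.card_compl, Fintype.card_fin]
  let e : {x // x ∈ Sᶜ} ≃ Fin Sᶜ.card := Sᶜ.equivFin
  let τ : V → Fin (t - S.card) :=
    fun v => finCongr hcard (e ⟨L.track v, Finset.mem_compl.2 (h v)⟩)
  have key : ∀ v w, τ v = τ w → L.track v = L.track w := by
    intro v w hc
    have h2 := e.injective ((finCongr hcard).injective hc)
    exact congrArg Subtype.val h2
  exact
    { track := τ
      pos := L.pos
      inj := fun v w h1 h2 => L.inj v w (key _ _ h1) h2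
      proper := fun v w hadj hc => L.proper v w hadj (key _ _ hc)
      noX := fun v w x y hvw hxy h1 h2 h3 h4 h5 =>
        L.noX v w x y hvw hxy (key _ _ h1) (key _ _ h2)
          (fun hc => h3 (congrArg (fun z => finCongr hcard (e z)) (Subtype.ext hc))) h4 h5 }

lemma exists_median {α : Type} (P : α → Prop) (f : α → ℕ) (a b c : α)
    (ha : P a) (hb : P b) (hc : P c)
    (hab : f a ≠ f b) (hbc : f b ≠ f c) (hac : f a ≠ f c) :
    ∃ x y z : α, P x ∧ P y ∧ P z ∧ f x < f y ∧ f y < f z := by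
  rcases lt_trichotomy (f a) (f b) with h1 | h1 | h1
  · rcases lt_trichotomy (f b) (f c) with h2 | h2 | h2
    · exact ⟨a, b, c, ha, hb, hc, h1, h2⟩
    · exact absurd h2 hbc
    · rcases lt_trichotomy (f a) (f c) with h3 | h3 | h3
      · exact ⟨a, c, b, ha, hc, hb, h3, h2⟩
      · exact absurd h3 hac
      · exact ⟨c, a, b, hc, ha, hb, h3, h1⟩
  · exact absurd h1 hab
  · rcases lt_trichotomy (f a) (f c) with h3 | h3 | h3
    · exact ⟨b, a, c, hb, ha, hc, h1, h3⟩
    · exact absurd h3 hac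
    · rcases lt_trichotomy (f b) (f c) with h2 | h2 | h2
      · exact ⟨b, c, a, hb, hc, ha, h2, h3⟩
      · exact absurd h2 hbc
      · exact ⟨c, b, a, hc, hb, ha, h2, h1⟩

lemma block_lt {B p q a b : ℕ} (hp : p < B) (h : a < b) : a * B + p < b * B + q := by
  have h1 : (a+1) * B ≤ b * B := Nat.mul_le_mul_right B h
  have h2 : (a+1) * B = a * B + B := by ring
  omega

lemma block_le {B p q a b : ℕ} (hq : q < B) (h : a * B + p < b * B + q) : a ≤ b := by
  by_contra hc
  push_neg at hc
  exact absurd (h.trans (block_lt hq hc)) (lt_irrefl _)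

lemma block_inj {B p q a b : ℕ} (hp : p < B) (hq : q < B) (h : a * B + p = b * B + q) :
    a = b ∧ p = q := by
  rcases lt_trichotomy a b with h1 | h1 | h1
  · exact absurd (h ▸ block_lt hp h1) (lt_irrefl _)
  · subst h1; constructor; rfl; omega
  · exact absurd (h ▸ block_lt hq h1) (lt_irrefl _)


/-! ### The step graph -/

abbrev StepV (V' : Type) (k n : ℕ) := Fin (k+1) ⊕ (Fin n ⊕ Fin n × V')

variable {V' : Type} (G' : SimpleGraph V') (k n : ℕ)

def stepAdj : StepV V' k n → StepV V' k n → Prop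
  | .inl i, .inl i' => i ≠ i'
  | .inl _, .inr (.inl _) => True
  | .inr (.inl _), .inl _ => True
  | .inl _, .inr (.inr _) => False
  | .inr (.inr _), .inl _ => False
  | .inr (.inl _), .inr (.inl _) => False
  | .inr (.inl j), .inr (.inr p) => j = p.1
  | .inr (.inr p), .inr (.inl j) => j = p.1
  | .inr (.inr p), .inr (.inr q) => p.1 = q.1 ∧ G'.Adj p.2 q.2

def StepG : SimpleGraph (StepV V' k n) where
  Adj := stepAdj G' k n
  symm := by
    constructor
    rintro (i | j | ⟨j, u⟩) (i' | j' | ⟨j', u'⟩) h <;>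
      simp only [stepAdj] at h ⊢ <;>
      first
        | trivial
        | exact h.symm
        | exact h
        | exact ⟨h.1.symm, h.2.symm⟩
  loopless := by
    constructor
    rintro (i | j | ⟨j, u⟩) h <;> simp only [stepAdj] at h
    · exact h rfl
    · exact G'.loopless.irrefl _ h.2

lemma stepG_adj (a b : StepV V' k n) : (StepG G' k n).Adj a b ↔ stepAdj G' k n a b := Iff.rfl

/-! ### Upper bound layout -/

def stepTrackNat (τ : V' → ℕ) : StepV V' k n → ℕ
  | .inl i => i
  | .inr (.inl _) => k + 1
  | .inr (.inr p) => k + 2 + τ p.2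

def stepPosNat (π : V' → ℕ) (B : ℕ) : StepV V' k n → ℕ
  | .inl _ => 0
  | .inr (.inl j) => j
  | .inr (.inr p) => p.1 * B + π p.2

noncomputable def stepLayout [Fintype V'] {m : ℕ} (L' : TrackLayout V' G' m) :
    TrackLayout (StepV V' k n) (StepG G' k n) (k + 2 + m) := by
  set B := (Finset.univ.sup L'.pos) + 1 with hBdef
  have hB : ∀ u, L'.pos u < B :=
    fun u => Nat.lt_succ_of_le (Finset.le_sup (Finset.mem_univ u))
  have hbound : ∀ v, stepTrackNat k n (fun u => (L'.track u : ℕ)) v < k + 2 + m := by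
    rintro (i | j | ⟨j, u⟩) <;> simp only [stepTrackNat]
    · have := i.isLt; omega
    · omega
    · have := (L'.track u).isLt; omega
  refine
    { track := fun v => ⟨stepTrackNat k n (fun u => (L'.track u : ℕ)) v, hbound v⟩
      pos := stepPosNat k n L'.pos B
      inj := ?_
      proper := ?_
      noX := ?_ }
  · rintro (i | j | ⟨j, u⟩) (i' | j' | ⟨j', u'⟩) h1 h2 <;>
      simp only [stepTrackNat, stepPosNat, Fin.mk.injEq] at h1 h2 <;>
      first
        | (exfalso; omega)
        | skip
    · exact congrArg Sum.inl (Fin.ext h1)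
    · exact congrArg (fun z => Sum.inr (Sum.inl z)) (Fin.ext h2)
    · have ht : L'.track u = L'.track u' := Fin.ext (by omega)
      obtain ⟨hj, hp⟩ := block_inj (hB u) (hB u') h2
      have hu : u = u' := L'.inj u u' ht hp
      have hjj : j = j' := Fin.ext hj
      rw [hu, hjj]
  · rintro (i | j | ⟨j, u⟩) (i' | j' | ⟨j', u'⟩) hadj <;>
      simp only [stepG_adj, stepAdj] at hadj <;>
      intro hc <;>
      simp only [Fin.mk.injEq, stepTrackNat] at hc <;>
      first
        | omega
        | exact L'.proper _ _ hadj.2 (Fin.ext (by omega))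
  · rintro (iv | jv | ⟨av, uv⟩) (iw | jw | ⟨aw, uw⟩) (ix | jx | ⟨ax, ux⟩)
      (iy | jy | ⟨ay, uy⟩) hvw hxy h1 h2 h3 h4 h5 <;>
      simp only [stepG_adj, stepAdj] at hvw hxy <;>
      simp only [Fin.mk.injEq, ne_eq, stepTrackNat, stepPosNat] at h1 h2 h3 h4 h5 <;>
      first
        | omega
        | skip
    all_goals try (
      have h6 := congrArg Fin.val hvw
      have h7 := congrArg Fin.val hxy
      first
        | (have h8 := block_le (hB uw) h5; omega)
        | (have h8 := block_le (hB ux) h4; omega))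
    all_goals (
      obtain ⟨he1, ha1⟩ := hvw
      obtain ⟨he2, ha2⟩ := hxy
      have he1' := congrArg Fin.val he1
      have he2' := congrArg Fin.val he2
      have hax : (av : ℕ) = ax := by
        have g1 := block_le (hB ux) h4
        have g2 := block_le (hB uw) h5
        omega
      rw [hax] at h4
      have g3 : (ay : ℕ) = (ax : ℕ) := by omega
      rw [g3] at h5
      have g4 : (aw : ℕ) = (ax : ℕ) := by omega
      rw [g4] at h5
      have hpx : L'.pos uv < L'.pos ux := by omega
      have hpy : L'.pos uy < L'.pos uw := by omega
      exact L'.noX uv uw ux uy ha1 ha2 (Fin.ext (by omega)) (Fin.ext (by omega))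
        (fun hcc => h3 (by rw [congrArg Fin.val hcc])) hpx hpy)

/-! ### Lower bound -/

lemma step_lower [Fintype V'] (hn : n = 2 * Nf k + 1)
    (IH : ∀ t, Nonempty (TrackLayout V' G' t) → Nf k ≤ t) :
    ∀ t, Nonempty (TrackLayout (StepV V' k n) (StepG G' k n) t) → Nf (k+1) ≤ t := by
  classical
  rintro t ⟨L⟩
  by_contra hlt
  push_neg at hlt
  rw [Nf_succ] at hlt
  -- clique tracks
  have hcliq : Function.Injective (fun i : Fin (k+1) => L.track (Sum.inl i)) := by
    intro i i' h
    by_contra hne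
    exact L.proper (Sum.inl i) (Sum.inl i') hne h
  set S0 : Finset (Fin t) := Finset.image (fun i : Fin (k+1) => L.track (Sum.inl i)) Finset.univ
    with hS0
  have hS0card : S0.card = k + 1 := by
    rw [hS0, Finset.card_image_of_injective _ hcliq, Finset.card_univ, Fintype.card_fin]
  -- w vertices avoid clique tracks
  have hmapsto : ∀ j ∈ (Finset.univ : Finset (Fin n)),
      L.track (Sum.inr (Sum.inl j)) ∈ S0ᶜ := by
    intro j _
    rw [Finset.mem_compl, hS0]
    simp only [Finset.mem_image, Finset.mem_univ, true_and]
    rintro ⟨i, hi⟩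
    exact L.proper (Sum.inl i) (Sum.inr (Sum.inl j)) trivial hi
  have hcompl : S0ᶜ.card = t - (k+1) := by
    rw [Finset.card_compl, Fintype.card_fin, hS0card]
  have hkt : k + 1 ≤ t := by
    calc k + 1 = S0.card := hS0card.symm
    _ ≤ _ := Finset.card_le_univ S0
    _ = t := by simp
  have hNf := Nf_pos k
  have hpig : S0ᶜ.card * 2 < (Finset.univ : Finset (Fin n)).card := by
    rw [hcompl, Finset.card_univ, Fintype.card_fin, hn]
    omega
  obtain ⟨c, -, hc⟩ := Finset.exists_lt_card_fiber_of_mul_lt_card_of_maps_to hmapsto hpig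
  rw [Finset.two_lt_card_iff] at hc
  obtain ⟨j1, j2, j3, hj1, hj2, hj3, h12, h13, h23⟩ := hc
  simp only [Finset.mem_filter, Finset.mem_univ, true_and] at hj1 hj2 hj3
  -- distinct positions
  have hposne : ∀ ja jb : Fin n, ja ≠ jb →
      L.track (Sum.inr (Sum.inl ja)) = c → L.track (Sum.inr (Sum.inl jb)) = c →
      L.pos (Sum.inr (Sum.inl ja)) ≠ L.pos (Sum.inr (Sum.inl jb)) := by
    intro ja jb hne ha hb hp
    have := L.inj _ _ (ha.trans hb.symm) hp
    simp only [Sum.inr.injEq, Sum.inl.injEq] at this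
    exact hne this
  obtain ⟨wa, wb, wc, hta, htb, htc, hab, hbc⟩ :=
    exists_median (fun j : Fin n => L.track (Sum.inr (Sum.inl j)) = c)
      (fun j => L.pos (Sum.inr (Sum.inl j))) j1 j2 j3 hj1 hj2 hj3
      (hposne j1 j2 h12 hj1 hj2) (hposne j2 j3 h23 hj2 hj3) (hposne j1 j3 h13 hj1 hj3)
  -- vertices of the middle copy avoid the clique tracks and the w-track
  have hadjwb : ∀ u : V', (StepG G' k n).Adj (Sum.inr (Sum.inr (wb, u))) (Sum.inr (Sum.inl wb)) :=
    fun u => rfl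
  have havoid : ∀ u : V', L.track (Sum.inr (Sum.inr (wb, u))) ∉ S0 ∪ {c} := by
    intro u hu
    rw [Finset.mem_union, Finset.mem_singleton] at hu
    rcases hu with hu | hu
    · rw [hS0] at hu
      simp only [Finset.mem_image, Finset.mem_univ, true_and] at hu
      obtain ⟨i, hi⟩ := hu
      rcases lt_trichotomy (L.pos (Sum.inr (Sum.inr (wb, u)))) (L.pos (Sum.inl i))
        with hlt' | heq | hgt
      · exact L.noX (Sum.inr (Sum.inr (wb, u))) (Sum.inr (Sum.inl wb)) (Sum.inl i)
          (Sum.inr (Sum.inl wa)) (hadjwb u) trivial hi.symm (htb.trans hta.symm)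
          (L.proper _ _ (hadjwb u)) hlt' hab
      · have := L.inj _ _ hi.symm heq
        simp at this
      · exact L.noX (Sum.inl i) (Sum.inr (Sum.inl wc)) (Sum.inr (Sum.inr (wb, u)))
          (Sum.inr (Sum.inl wb)) trivial (hadjwb u) hi (htc.trans htb.symm)
          (L.proper _ _ trivial) hgt hbc
    · exact L.proper _ _ (hadjwb u) (hu.trans htb.symm)
  have hcnotS0 : c ∉ S0 := by
    have := hmapsto wb (Finset.mem_univ wb)
    rw [Finset.mem_compl, htb] at this
    exact this
  have hSk : (S0 ∪ {c}).card = k + 2 := by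
    rw [Finset.card_union_of_disjoint (Finset.disjoint_singleton_right.2 hcnotS0),
      hS0card, Finset.card_singleton]
  have hinj2 : Function.Injective (fun u : V' => (Sum.inr (Sum.inr (wb, u)) : StepV V' k n)) := by
    intro u u' h
    simpa using h
  have hadj2 : ∀ u u', G'.Adj u u' →
      (StepG G' k n).Adj (Sum.inr (Sum.inr (wb, u))) (Sum.inr (Sum.inr (wb, u'))) :=
    fun u u' h => ⟨rfl, h⟩
  have hIH := IH _ ⟨layoutAvoid (layoutComap _ hinj2 hadj2 L) (S0 ∪ {c}) (fun u => havoid u)⟩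
  rw [hSk] at hIH
  have hk2t : k + 2 ≤ t := by
    calc k + 2 = (S0 ∪ {c}).card := hSk.symm
    _ ≤ _ := Finset.card_le_univ _
    _ = t := by simp
  omega

lemma connected_transfer {A B : Type} {G : SimpleGraph A} {H : SimpleGraph B} (f : A → B)
    (hhom : ∀ x y, G.Adj x y → H.Adj (f x) (f y)) (hsurj : Function.Surjective f)
    (hG : G.Connected) : H.Connected := by
  haveI : Nonempty B := ⟨f hG.nonempty.some⟩
  refine SimpleGraph.Connected.mk (fun a b => ?_)
  obtain ⟨a0, rfl⟩ := hsurj a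
  obtain ⟨b0, rfl⟩ := hsurj b
  obtain ⟨w⟩ := hG.preconnected a0 b0
  exact ⟨w.map ⟨f, fun {x y} h => hhom x y h⟩⟩

lemma step_decomp [Fintype V'] (D' : TreeDecomp V' G')
    (hD' : ∀ x, (D'.bag x).ncard ≤ k + 1) :
    ∃ D : TreeDecomp (StepV V' k n) (StepG G' k n), ∀ x : D.ι, (D.bag x).ncard ≤ (k + 1) + 1 := by
  classical
  letI : Fintype D'.ι := D'.finι
  obtain ⟨r', p', d', hpr, hpd, hadj'⟩ := exists_parent D'.isTree
  have hp'ne : ∀ x, x ≠ r' → p' x ≠ x := by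
    intro x hx he
    have := hpd x hx
    rw [he] at this
    exact lt_irrefl _ this
  set ι₀ : Type := Unit ⊕ (Fin n × (Unit ⊕ D'.ι)) with hι₀
  let par : ι₀ → ι₀ := fun a => match a with
    | .inl _ => .inl ()
    | .inr (_, .inl _) => .inl ()
    | .inr (j, .inr x) => if x = r' then .inr (j, .inl ()) else .inr (j, .inr (p' x))
  let dep : ι₀ → ℕ := fun a => match a with
    | .inl _ => 0
    | .inr (_, .inl _) => 1
    | .inr (_, .inr x) => 2 + d' x
  have hpar : par (Sum.inl ()) = Sum.inl () := rfl
  have hdep : ∀ a : ι₀, a ≠ Sum.inl () → dep (par a) < dep a := by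
    rintro (u | ⟨j, (u | x)⟩) ha
    · exact absurd rfl ha
    · exact Nat.zero_lt_one
    · show dep (if x = r' then Sum.inr (j, Sum.inl ()) else Sum.inr (j, Sum.inr (p' x))) < 2 + d' x
      by_cases hx : x = r'
      · rw [if_pos hx]; show 1 < 2 + d' x; omega
      · rw [if_neg hx]; show 2 + d' (p' x) < 2 + d' x; have := hpd x hx; omega
  -- tree adjacencies
  have hA1 : ∀ j : Fin n, (parentGraph par).Adj (Sum.inr (j, Sum.inl ())) (Sum.inl ()) := by
    intro j
    rw [parentGraph_adj]
    exact ⟨fun h => Sum.inr_ne_inl h, Or.inl rfl⟩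
  have hA2 : ∀ j : Fin n, (parentGraph par).Adj (Sum.inr (j, Sum.inr r')) (Sum.inr (j, Sum.inl ())) := by
    intro j
    rw [parentGraph_adj]
    refine ⟨fun h => ?_, Or.inl (by show (if r' = r' then _ else _) = _; rw [if_pos rfl])⟩
    injection h with h2
    have h3 := congrArg Prod.snd h2
    exact Sum.inr_ne_inl h3
  have hA3 : ∀ (j : Fin n) (x : D'.ι), x ≠ r' →
      (parentGraph par).Adj (Sum.inr (j, Sum.inr x)) (Sum.inr (j, Sum.inr (p' x))) := by
    intro j x hx
    rw [parentGraph_adj]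
    refine ⟨fun h => ?_, Or.inl (by show (if x = r' then _ else _) = _; rw [if_neg hx])⟩
    injection h with h2
    have h3 := congrArg Prod.snd h2
    injection h3 with h4
    exact (hp'ne x hx) h4.symm
  -- bags
  let bg : ι₀ → Set (StepV V' k n) := fun a => match a with
    | .inl _ => Set.range Sum.inl
    | .inr (j, .inl _) => Set.range Sum.inl ∪ {Sum.inr (Sum.inl j)}
    | .inr (j, .inr x) => {Sum.inr (Sum.inl j)} ∪ (fun u => Sum.inr (Sum.inr (j, u))) '' (D'.bag x)
  refine ⟨{ ι := ι₀, finι := inferInstance, tree := parentGraph par,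
            isTree := parentGraph_isTree (p := par) (d := dep) (r := Sum.inl ()) hpar hdep, bag := bg,
            cover := ?_, edgeCover := ?_, subtreeConnected := ?_ }, ?_⟩
  · rintro (i | j | ⟨j, u⟩)
    · exact ⟨Sum.inl (), ⟨i, rfl⟩⟩
    · exact ⟨Sum.inr (j, Sum.inl ()), Or.inr rfl⟩
    · obtain ⟨x, hx⟩ := D'.cover u
      exact ⟨Sum.inr (j, Sum.inr x), Or.inr ⟨u, hx, rfl⟩⟩
  · rintro (i | j | ⟨j, u⟩) (i' | j' | ⟨j', u'⟩) hadj <;>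
      rw [stepG_adj] at hadj
    · exact ⟨Sum.inl (), ⟨i, rfl⟩, ⟨i', rfl⟩⟩
    · exact ⟨Sum.inr (j', Sum.inl ()), Or.inl ⟨i, rfl⟩, Or.inr rfl⟩
    · exact hadj.elim
    · exact ⟨Sum.inr (j, Sum.inl ()), Or.inr rfl, Or.inl ⟨i', rfl⟩⟩
    · exact hadj.elim
    · have hj : j = j' := hadj
      subst hj
      obtain ⟨x, hx⟩ := D'.cover u'
      exact ⟨Sum.inr (j, Sum.inr x), Or.inl rfl, Or.inr ⟨u', hx, rfl⟩⟩
    · exact hadj.elim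
    · have hj : j' = j := hadj
      subst hj
      obtain ⟨x, hx⟩ := D'.cover u
      exact ⟨Sum.inr (j', Sum.inr x), Or.inr ⟨u, hx, rfl⟩, Or.inl rfl⟩
    · obtain ⟨hj, hA⟩ := (hadj : j = j' ∧ G'.Adj u u')
      subst hj
      obtain ⟨x, hx, hx'⟩ := D'.edgeCover u u' hA
      exact ⟨Sum.inr (j, Sum.inr x), Or.inr ⟨u, hx, rfl⟩, Or.inr ⟨u', hx', rfl⟩⟩
  · rintro (i | j | ⟨j, u⟩)
    · -- clique vertex
      have hroot : Sum.inl () ∈ {a : ι₀ | (Sum.inl i : StepV V' k n) ∈ bg a} := ⟨i, rfl⟩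
      haveI : Nonempty ↑{a : ι₀ | (Sum.inl i : StepV V' k n) ∈ bg a} := ⟨⟨_, hroot⟩⟩
      refine SimpleGraph.Connected.mk (fun a b => ?_)
      have key : ∀ z : ↑{a : ι₀ | (Sum.inl i : StepV V' k n) ∈ bg a},
          ((parentGraph par).induce _).Reachable z ⟨Sum.inl (), hroot⟩ := by
        rintro ⟨(u0 | ⟨j0, (u0 | x0)⟩), hz⟩
        · exact SimpleGraph.Reachable.refl _
        · refine SimpleGraph.Adj.reachable ?_
          exact hA1 j0
        · exfalso
          obtain h | ⟨u1, -, h⟩ := hz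
          · exact Sum.inl_ne_inr h
          · exact Sum.inr_ne_inl h
      exact (key a).trans (key b).symm
    · -- w vertex
      have hmemx : ∀ x : D'.ι,
          Sum.inr (j, Sum.inr x) ∈ {a : ι₀ | (Sum.inr (Sum.inl j) : StepV V' k n) ∈ bg a} :=
        fun x => Or.inl rfl
      have hhub : Sum.inr (j, Sum.inl ()) ∈
          {a : ι₀ | (Sum.inr (Sum.inl j) : StepV V' k n) ∈ bg a} := Or.inr rfl
      haveI : Nonempty ↑{a : ι₀ | (Sum.inr (Sum.inl j) : StepV V' k n) ∈ bg a} := ⟨⟨_, hhub⟩⟩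
      refine SimpleGraph.Connected.mk (fun a b => ?_)
      have walkdown : ∀ (m : ℕ) (x : D'.ι), d' x ≤ m →
          ((parentGraph par).induce _).Reachable ⟨Sum.inr (j, Sum.inr x), hmemx x⟩
            ⟨Sum.inr (j, Sum.inl ()), hhub⟩ := by
        intro m
        induction m with
        | zero =>
          intro x hx
          by_cases hx' : x = r'
          · subst hx'
            exact SimpleGraph.Adj.reachable (hA2 j)
          · exact absurd ((hpd x hx').trans_le hx) (Nat.not_lt_zero _)
        | succ m ih =>
          intro x hx
          by_cases hx' : x = r'
          · subst hx'
            exact SimpleGraph.Adj.reachable (hA2 j)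
          · refine (SimpleGraph.Adj.reachable ?_).trans (ih (p' x) (by have := hpd x hx'; omega))
            exact hA3 j x hx'
      have key : ∀ z : ↑{a : ι₀ | (Sum.inr (Sum.inl j) : StepV V' k n) ∈ bg a},
          ((parentGraph par).induce _).Reachable z ⟨Sum.inr (j, Sum.inl ()), hhub⟩ := by
        rintro ⟨(u0 | ⟨j0, (u0 | x0)⟩), hz⟩
        · exfalso
          obtain ⟨i0, h⟩ := hz
          exact Sum.inl_ne_inr h
        · obtain h | h := hz
          · exact absurd h (by rintro ⟨i0, h⟩; exact Sum.inl_ne_inr h)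
          · have hj : j = j0 := by
              have h' : (Sum.inr (Sum.inl j) : StepV V' k n) = Sum.inr (Sum.inl j0) := h
              simp only [Sum.inr.injEq, Sum.inl.injEq] at h'
              exact h'
            subst hj
            exact SimpleGraph.Reachable.refl _
        · obtain h | ⟨u1, -, h⟩ := hz
          · have hj : j = j0 := by
              have h' : (Sum.inr (Sum.inl j) : StepV V' k n) = Sum.inr (Sum.inl j0) := h
              simp only [Sum.inr.injEq, Sum.inl.injEq] at h'
              exact h'
            subst hj
            exact walkdown (d' x0) x0 le_rfl
          · exfalso
            injection h with h2
            exact Sum.inr_ne_inl h2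
      exact (key a).trans (key b).symm
    · -- H vertex
      refine connected_transfer
        (f := fun z : ↑{x : D'.ι | u ∈ D'.bag x} =>
          (⟨Sum.inr (j, Sum.inr z.1), Or.inr ⟨u, z.2, rfl⟩⟩ :
            ↑{a : ι₀ | (Sum.inr (Sum.inr (j, u)) : StepV V' k n) ∈ bg a}))
        ?_ ?_ (D'.subtreeConnected u)
      · rintro ⟨x, hx⟩ ⟨y, hy⟩ hxy
        have hxy' : D'.tree.Adj x y := hxy
        rw [hadj'] at hxy'
        obtain ⟨hne, hp | hp⟩ := hxy'
        · have hxr : x ≠ r' := by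
            intro h; subst h; rw [hpr] at hp; exact hne hp
          show (parentGraph par).Adj (Sum.inr (j, Sum.inr x)) (Sum.inr (j, Sum.inr y))
          rw [← hp]
          exact hA3 j x hxr
        · have hyr : y ≠ r' := by
            intro h; subst h; rw [hpr] at hp; exact hne hp.symm
          show (parentGraph par).Adj (Sum.inr (j, Sum.inr x)) (Sum.inr (j, Sum.inr y))
          rw [← hp]
          exact ((hA3 j y hyr).symm)
      · rintro ⟨(u0 | ⟨j0, (u0 | x0)⟩), hz⟩
        · exfalso; obtain ⟨i0, h⟩ := hz; exact Sum.inl_ne_inr h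
        · exfalso
          obtain h | h := hz
          · obtain ⟨i0, h⟩ := h; exact Sum.inl_ne_inr h
          · have h' : (Sum.inr (Sum.inr (j, u)) : StepV V' k n) = Sum.inr (Sum.inl j0) := h
            simp at h'
        · obtain h | ⟨u1, hu1, h⟩ := hz
          · exfalso
            have h' : (Sum.inr (Sum.inr (j, u)) : StepV V' k n) = Sum.inr (Sum.inl j0) := h
            simp at h'
          · have h' : (Sum.inr (Sum.inr (j0, u1)) : StepV V' k n) = Sum.inr (Sum.inr (j, u)) := h
            simp only [Sum.inr.injEq, Prod.mk.injEq] at h'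
            obtain ⟨hj0, hu1'⟩ := h'
            subst hj0
            subst hu1'
            exact ⟨⟨x0, hu1⟩, rfl⟩
  · -- ncard bounds
    have hrange : (Set.range (Sum.inl : Fin (k+1) → StepV V' k n)).ncard = k + 1 := by
      rw [← Set.image_univ, Set.ncard_image_of_injective _ Sum.inl_injective, Set.ncard_univ,
        Nat.card_eq_fintype_card, Fintype.card_fin]
    rintro (u0 | ⟨j0, (u0 | x0)⟩)
    · show (Set.range (Sum.inl : Fin (k+1) → StepV V' k n)).ncard ≤ (k+1)+1
      rw [hrange]; omega
    · show (Set.range (Sum.inl : Fin (k+1) → StepV V' k n) ∪ {Sum.inr (Sum.inl j0)}).ncard ≤ (k+1)+1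
      calc _ ≤ _ := Set.ncard_union_le _ _
      _ ≤ (k+1)+1 := by rw [hrange, Set.ncard_singleton]
    · show ({Sum.inr (Sum.inl j0)} ∪
          (fun u => (Sum.inr (Sum.inr (j0, u)) : StepV V' k n)) '' (D'.bag x0)).ncard ≤ (k+1)+1
      have hinjf : Function.Injective (fun u : V' => (Sum.inr (Sum.inr (j0, u)) : StepV V' k n)) := by
        intro a b h; simpa using h
      calc _ ≤ _ := Set.ncard_union_le _ _
      _ ≤ (k+1)+1 := by
        rw [Set.ncard_singleton, Set.ncard_image_of_injective _ hinjf]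
        have := hD' x0
        omega


/-! ### The main induction -/

theorem key (k : ℕ) : ∃ (V : Type) (fV : Fintype V) (G : SimpleGraph V),
    (∃ D : TreeDecomp V G, ∀ x : D.ι, (D.bag x).ncard ≤ k + 1) ∧
    Nonempty (TrackLayout V G (Nf k)) ∧
    (∀ t, Nonempty (TrackLayout V G t) → Nf k ≤ t) := by
  induction k with
  | zero =>
    refine ⟨PUnit, inferInstance, ⊥, ⟨?_, ?_⟩, ⟨?_⟩, ?_⟩
    · exact
        { ι := PUnit
          finι := inferInstance
          tree := parentGraph id
          isTree := parentGraph_isTree (p := id) (d := fun _ => 0) (r := PUnit.unit) rfl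
            (fun a ha => absurd rfl ha)
          bag := fun _ => Set.univ
          cover := fun v => ⟨PUnit.unit, trivial⟩
          edgeCover := fun v w h => h.elim
          subtreeConnected := fun v => by
            haveI : Nonempty ↑{x : PUnit | v ∈ (Set.univ : Set PUnit)} :=
              ⟨⟨PUnit.unit, trivial⟩⟩
            refine SimpleGraph.Connected.mk (fun a b => ?_)
            rw [Subsingleton.elim a b] }
    · intro x
      simp [Set.ncard_univ]
    · exact
        { track := fun _ => ⟨0, Nat.one_pos⟩
          pos := fun _ => 0
          inj := fun v w _ _ => Subsingleton.elim v w
          proper := fun v w h => h.elim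
          noX := fun v w x y h _ _ _ _ _ _ => h.elim }
    · rintro t ⟨L⟩
      have h := (L.track PUnit.unit).isLt
      show 1 ≤ t
      omega
  | succ k ih =>
    obtain ⟨V', fV', G', ⟨D', hD'⟩, ⟨L'⟩, hlow⟩ := ih
    letI := fV'
    refine ⟨StepV V' k (2 * Nf k + 1), inferInstance, StepG G' k (2 * Nf k + 1),
      step_decomp G' k _ D' hD', ?_, step_lower G' k _ rfl hlow⟩
    have hcast : k + 2 + Nf k = Nf (k + 1) := by rw [Nf_succ]; omega
    exact hcast ▸ ⟨stepLayout G' k _ L'⟩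

end TNProof

/-- For every integer `k ≥ 0` there is a (finite) graph `G_k` with
tree-width at most `k` and track-number exactly `(k+1)(k+2)/2`. Consequently, the
maximum track-number of graphs of tree-width `k` is at least quadratic in `k`. -/
theorem exists_treewidth_graph_with_quadratic_trackNumber (k : ℕ) :
    ∃ (V : Type) (_ : Fintype V) (G : SimpleGraph V),
      treewidth V G ≤ k ∧ trackNumber V G = (k + 1) * (k + 2) / 2 := by
  obtain ⟨V, fV, G, ⟨D, hD⟩, hup, hlow⟩ := TNProof.key k
  refine ⟨V, fV, G, ?_, ?_⟩
  · exact Nat.sInf_le ⟨D, hD⟩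
  · rw [← TNProof.Nf_eq]
    refine le_antisymm (Nat.sInf_le hup) (le_csInf ⟨TNProof.Nf k, hup⟩ (fun t ht => hlow t ht))
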